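/- Let S be a standard graded polynomial ring over a field K, and let I, J be homogeneous ideals of S. If the Hilbert polynomial of S/(I+J) is the zero polynomial, then the Hilbert polynomials of S/(I∩J) and S/(I·J) are equal; in particular, (I∩J)_i = (I·J)_i for all sufficiently large i. -/

import Mathlib

open MvPolynomial

attribute [local instance] MvPolynomial.gradedAlgebra

lemma prod_X_pow_mem_span_pow {σ : Type*} {K : Type*} [CommRing K] (t : Finset σ) (f : σ → ℕ) :
    (∏ x ∈ t, (X x : MvPolynomial σ K) ^ f x) ∈
      (Ideal.span (Set.range X : Set (MvPolynomial σ K))) ^ (∑ x ∈ t, f x) := by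
  classical
  induction t using Finset.induction with
  | empty => simp
  | insert _ _ h ih =>
      rw [Finset.prod_insert h, Finset.sum_insert h, pow_add]
      exact Ideal.mul_mem_mul (Ideal.pow_mem_pow (Ideal.subset_span (Set.mem_range_self _)) _) ih

lemma isHomogeneous_mem_pow {σ : Type*} {K : Type*} [CommRing K] {F : MvPolynomial σ K} {i : ℕ}
    (hF : F.IsHomogeneous i) :
    F ∈ (Ideal.span (Set.range X : Set (MvPolynomial σ K))) ^ i := by
  rw [F.as_sum]
  refine Ideal.sum_mem _ fun s hs => ?_
  have hdeg : s.degree = i := by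
    rw [Finsupp.degree_eq_weight_one]
    exact hF (mem_support_iff.mp hs)
  rw [monomial_eq]
  refine Ideal.mul_mem_left _ _ ?_
  have h := prod_X_pow_mem_span_pow (K := K) s.support (fun x => s x)
  rwa [show (∑ x ∈ s.support, s x) = i from hdeg] at h

lemma degree_le_of_mem_span_X_pow {σ : Type*} {K : Type*} [CommRing K] :
    ∀ (k : ℕ) (x : MvPolynomial σ K),
      x ∈ (Ideal.span (Set.range X : Set (MvPolynomial σ K))) ^ k →
      ∀ s ∈ x.support, k ≤ s.degree := by
  classical
  intro k
  induction k with
  | zero => intro x _ s _; exact Nat.zero_le _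
  | succ k ih =>
      intro x hx
      rw [pow_succ] at hx
      refine Submodule.mul_induction_on hx ?_ ?_
      · intro a ha b hb s hs
        obtain ⟨u, hu, v, hv, rfl⟩ := Finset.mem_add.mp (MvPolynomial.support_mul a b hs)
        have h1 : k ≤ u.degree := ih a ha u hu
        have h2 : 1 ≤ v.degree := by
          have hb' : ∀ m ∈ b.support, ∃ i ∈ (Set.univ : Set σ), (m : σ →₀ ℕ) i ≠ 0 := by
            have : b ∈ Ideal.span (MvPolynomial.X '' Set.univ : Set (MvPolynomial σ K)) := by
              rwa [Set.image_univ]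
            exact mem_ideal_span_X_image.mp this
          obtain ⟨i, -, hi⟩ := hb' v hv
          have : v.degree ≠ 0 := fun h0 => hi (by
            rw [Finsupp.degree_eq_zero_iff] at h0; simp [h0])
          omega
        have : (u + v).degree = u.degree + v.degree := by
          simp only [Finsupp.degree_eq_weight_one, map_add]
        omega
      · intro a b ha hb s hs
        rcases Finset.mem_union.mp (MvPolynomial.support_add hs) with h | h
        · exact ha s h
        · exact hb s h

/-- Let `S = K[X_0, …, X_n]` be a standard graded polynomial ring over a
field `K` and let `I, J` be homogeneous ideals of `S`. If the Hilbert polynomial of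
`S/(I + J)` is the zero polynomial (equivalently, `(I + J)_i = S_i` for all large `i`),
then the Hilbert polynomials of `S/(I ⊓ J)` and `S/(I * J)` are equal; in particular
`(I ⊓ J)_i = (I * J)_i` for all sufficiently large `i`. -/
theorem inf_eq_mul_in_large_degrees_of_hilbertPolynomial_sum_eq_zero
    {K : Type*} [Field K] (n : ℕ) (I J : Ideal (MvPolynomial (Fin (n + 1)) K))
    (hI : Ideal.IsHomogeneous (homogeneousSubmodule (Fin (n + 1)) K) I)
    (hJ : Ideal.IsHomogeneous (homogeneousSubmodule (Fin (n + 1)) K) J)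
    -- the Hilbert polynomial of `S/(I+J)` is zero: in all large degrees the homogeneous
    -- component of `I + J` is the full component
    (hHP : ∃ i₀ : ℕ, ∀ i ≥ i₀, ∀ F : MvPolynomial (Fin (n + 1)) K,
      F.IsHomogeneous i → F ∈ I + J) :
    ∃ i₀ : ℕ, ∀ i ≥ i₀, ∀ F : MvPolynomial (Fin (n + 1)) K,
      F.IsHomogeneous i → (F ∈ I ⊓ J ↔ F ∈ I * J) := by
  obtain ⟨i₀, h₀⟩ := hHP
  set S := MvPolynomial (Fin (n + 1)) K
  set m : Ideal S := Ideal.span (Set.range X) with hm_def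
  -- `m ^ i₀ ≤ I + J`
  have hm : m ^ i₀ ≤ I + J := by
    intro x hx
    have hsupp := degree_le_of_mem_span_X_pow i₀ x hx
    rw [← x.sum_homogeneousComponent]
    refine Ideal.sum_mem _ fun d _ => ?_
    by_cases hd : i₀ ≤ d
    · exact h₀ d hd _ (homogeneousComponent_isHomogeneous d x)
    · rw [homogeneousComponent_eq_zero' _ _ (fun s hs => by have := hsupp s hs; omega)]
      exact zero_mem _
  -- `(I + J) * (I ⊓ J) ≤ I * J`
  have hmul : (I + J) * (I ⊓ J) ≤ I * J := by
    rw [Ideal.mul_le]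
    intro a ha b hb
    obtain ⟨x, hx, y, hy, rfl⟩ := Submodule.mem_sup.mp ha
    rw [add_mul]
    refine Ideal.add_mem _ (Ideal.mul_mem_mul hx hb.2) ?_
    rw [mul_comm y b]
    exact Ideal.mul_mem_mul hb.1 hy
  -- Artin–Rees
  obtain ⟨k, hAR⟩ := Ideal.exists_pow_inf_eq_pow_smul m (I ⊓ J : Ideal S)
  refine ⟨k + i₀, fun i hi F hF => ?_⟩
  constructor
  · intro hF'
    have h1 : F ∈ m ^ (k + i₀) := by
      have := isHomogeneous_mem_pow hF
      exact Ideal.pow_le_pow_right hi this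
    have h2 : F ∈ m ^ (k + i₀) • (⊤ : Ideal S) ⊓ (I ⊓ J) := by
      rw [smul_eq_mul, Ideal.mul_top]
      exact ⟨h1, hF'⟩
    rw [hAR (k + i₀) (Nat.le_add_right k i₀)] at h2
    have h3 : m ^ (k + i₀ - k) • (m ^ k • (⊤ : Ideal S) ⊓ (I ⊓ J)) ≤ I * J := by
      rw [Nat.add_sub_cancel_left, smul_eq_mul]
      calc m ^ i₀ * (m ^ k • (⊤ : Ideal S) ⊓ (I ⊓ J))
          ≤ (I + J) * (I ⊓ J) := Ideal.mul_mono hm inf_le_right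
        _ ≤ I * J := hmul
    exact h3 h2
  · intro hF'
    exact Ideal.mul_le_inf hF'
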